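/- arXiv:1612.04981 — 4 statements merged into one kernel-verified Lean document; each statement's English description precedes it below -/
import Mathlib

section
/- If every downward trace included state's downward language is a subset relation, i.e., q ⊑^dw q' iff D(q) ⊆ D(q'), then saturation with S(id, ⊑^dw) preserves the language: adding a transition ⟨p, σ, r₁…rₙ⟩ whenever there exists ⟨p, σ, r₁'…rₙ'⟩ ∈ δ with rᵢ ⊑^dw rᵢ' for all i does not change L(A). -/
/-- Trees over an alphabet: a node label and a list of children. -/
inductive TTree (Sym : Type) : Type where
  | node : Sym → List (TTree Sym) → TTree Sym

/-- A top-down tree automaton: transitions and initial states. -/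
structure TDTA (Q Sym : Type) where
  delta : Set (Q × Sym × List Q)
  init : Set Q

/-- `Accepts δ q t`: there is a run of the transition relation `δ` on the
closed tree `t` rooted at state `q` (leaf rules are transitions with empty target list). -/
inductive Accepts {Q Sym : Type} (δ : Set (Q × Sym × List Q)) : Q → TTree Sym → Prop where
  | node {q : Q} {a : Sym} {qs : List Q} {ts : List (TTree Sym)}
      (hmem : (q, a, qs) ∈ δ) (hlen : qs.length = ts.length)
      (hchild : ∀ i : Fin qs.length, Accepts δ (qs.get i) (ts.get (Fin.cast hlen i))) :
      Accepts δ q (TTree.node a ts)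

/-- The downward language of a state. -/
def Dlang {Q Sym : Type} (δ : Set (Q × Sym × List Q)) (q : Q) : Set (TTree Sym) :=
  {t | Accepts δ q t}

/-- The language of a tree automaton. -/
def Lang {Q Sym : Type} (A : TDTA Q Sym) : Set (TTree Sym) :=
  {t | ∃ q ∈ A.init, Accepts A.delta q t}

/-- The `S`-saturated automaton: add every potential transition `t'` for which
some existing transition `t ∈ δ` satisfies `t' S t`. -/
def satAut {Q Sym : Type} (A : TDTA Q Sym)
    (S : Q × Sym × List Q → Q × Sym × List Q → Prop) : TDTA Q Sym :=
  ⟨{t' | ∃ t ∈ A.delta, S t' t}, A.init⟩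

/-- The pruned automaton: keep only the transitions that are maximal w.r.t. `P`. -/
def pruneAut {Q Sym : Type} (A : TDTA Q Sym)
    (P : Q × Sym × List Q → Q × Sym × List Q → Prop) : TDTA Q Sym :=
  ⟨{t | t ∈ A.delta ∧ ∀ t' ∈ A.delta, ¬ P t t'}, A.init⟩

/-- The quotient automaton by an equivalence (setoid) on states. -/
def quotAut {Q Sym : Type} (A : TDTA Q Sym) (s : Setoid Q) : TDTA (Quotient s) Sym :=
  ⟨{t | ∃ r ∈ A.delta, t = (Quotient.mk s r.1, r.2.1, r.2.2.map (Quotient.mk s))},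
   {x | ∃ q ∈ A.init, x = Quotient.mk s q}⟩

/-- `Srel Rs Rt` compares two transitions over the same symbol:
sources by `Rs`, target tuples componentwise by `Rt`. -/
def Srel {Q Sym : Type} (Rs Rt : Q → Q → Prop) :
    Q × Sym × List Q → Q × Sym × List Q → Prop :=
  fun t' t => t'.2.1 = t.2.1 ∧ Rs t'.1 t.1 ∧ List.Forall₂ Rt t'.2.2 t.2.2

lemma sat_accepts {Q Sym : Type} (A : TDTA Q Sym) {q : Q} {t : TTree Sym}
    (h : Accepts (satAut A (Srel (Eq : Q → Q → Prop)
      (fun x y => Dlang A.delta x ⊆ Dlang A.delta y))).delta q t) :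
    Accepts A.delta q t := by
  induction h with
  | @node q a qs ts hmem hlen hchild ih =>
    obtain ⟨⟨q', a', qs'⟩, hd, hsym, hsrc, hfor⟩ := hmem
    dsimp at hsym hsrc
    subst hsym; subst hsrc
    have hlq : qs.length = qs'.length := hfor.length_eq
    have hlen' : qs'.length = ts.length := hlq ▸ hlen
    refine Accepts.node hd hlen' ?_
    intro i
    have hi : (i : ℕ) < qs.length := by omega
    have hr := List.forall₂_iff_get.mp hfor |>.2 i hi i.isLt
    have := ih ⟨i, hi⟩
    exact hr this

/-- saturation with `S(id, ⊑dw)` — same source and symbol, new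
targets downward-trace dominated by the existing targets — preserves the
language. -/
theorem stmt5 {Q Sym : Type} (A : TDTA Q Sym) :
    Lang (satAut A (Srel (Eq : Q → Q → Prop)
      (fun x y => Dlang A.delta x ⊆ Dlang A.delta y))) = Lang A := by
  ext t
  constructor
  · rintro ⟨q, hq, h⟩
    exact ⟨q, hq, sat_accepts A h⟩
  · rintro ⟨q, hq, h⟩
    refine ⟨q, hq, ?_⟩
    clear hq
    induction h with
    | @node q a qs ts hmem hlen hchild ih =>
      refine Accepts.node ⟨(q, a, qs), hmem, rfl, rfl, ?_⟩ hlen ih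
      exact List.forall₂_same.mpr (fun x _ => subset_rfl)
end

section
/- Quotienting by downward simulation equivalence preserves the language: if ≡ is the equivalence induced by downward simulation (p ≡ q iff p ⪯^dw q and q ⪯^dw p), then L(A/≡) = L(A). -/
theorem accepts_quot_of_accepts {Q Sym : Type} (δ : Set (Q × Sym × List Q)) (s : Setoid Q)
    {q : Q} {t : TTree Sym} (h : Accepts δ q t) :
    Accepts {t | ∃ r ∈ δ, t = (Quotient.mk s r.1, r.2.1, r.2.2.map (Quotient.mk s))}
      (Quotient.mk s q) t := by
  induction h with
  | @node q a qs ts hmem hlen hchild ih =>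
    refine Accepts.node (qs := qs.map (Quotient.mk s)) ⟨(q, a, qs), hmem, rfl⟩
      (by simpa using hlen) ?_
    intro i
    have : ((qs.map (Quotient.mk s)).get i)
        = Quotient.mk s (qs.get (Fin.cast (by simp) i)) := by
      simp
    rw [this]
    exact ih _

theorem accepts_of_accepts_quot {Q Sym : Type} (δ : Set (Q × Sym × List Q)) (sim : Q → Q → Prop)
    (htrans : ∀ p q r, sim p q → sim q r → sim p r)
    (hstep : ∀ p q, sim p q → ∀ (a : Sym) (ps : List Q), (p, a, ps) ∈ δ →
      ∃ qs : List Q, (q, a, qs) ∈ δ ∧ ∃ h : ps.length = qs.length,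
        ∀ i : Fin ps.length, sim (ps.get i) (qs.get (Fin.cast h i)))
    (s : Setoid Q) (hs : ∀ p q : Q, s.r p q → sim p q ∧ sim q p)
    {x : Quotient s} {t : TTree Sym}
    (h : Accepts {t | ∃ r ∈ δ, t = (Quotient.mk s r.1, r.2.1, r.2.2.map (Quotient.mk s))} x t) :
    ∀ p q : Q, x = Quotient.mk s p → sim p q → Accepts δ q t := by
  induction h with
  | @node x a xs ts hmem hlen hchild ih =>
    rintro p q hx hpq
    obtain ⟨⟨r, a', rs⟩, hr, heq⟩ := hmem
    obtain ⟨h1, h2, h3⟩ : x = Quotient.mk s r ∧ a = a' ∧ xs = rs.map (Quotient.mk s) := by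
      refine ⟨congrArg Prod.fst heq, ?_, ?_⟩
      · exact congrArg (fun z => z.2.1) heq
      · exact congrArg (fun z => z.2.2) heq
    subst h2 h3
    have hpr : s.r p r := Quotient.exact (hx ▸ h1)
    have hrq : sim r q := htrans _ _ _ (hs _ _ hpr).2 hpq
    obtain ⟨qs', hmem', hlen', hsim⟩ := hstep r q hrq a rs hr
    have hlrs : rs.length = ts.length := by simpa using hlen
    refine Accepts.node hmem' (hlrs ▸ hlen'.symm ▸ rfl : qs'.length = ts.length) ?_
    intro i
    have j : Fin rs.length := Fin.cast hlen'.symm i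
    set j : Fin rs.length := Fin.cast hlen'.symm i with hj
    have hxj : (rs.map (Quotient.mk s)).get (Fin.cast (by simp) j)
        = Quotient.mk s (rs.get j) := by simp
    have hji : Fin.cast hlen' j = i := Fin.ext (by simp [hj])
    have hsimji : sim (rs.get j) (qs'.get i) := hji ▸ hsim j
    have := ih (Fin.cast (by simp) j) (rs.get j) (qs'.get i) hxj hsimji
    have hidx : Fin.cast hlen (Fin.cast (by simp : rs.length = (rs.map (Quotient.mk s)).length) j)
        = Fin.cast (hlrs ▸ hlen'.symm ▸ rfl : qs'.length = ts.length) i :=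
      Fin.ext (by simp [hj])
    rwa [hidx] at this

/-- quotienting by the equivalence induced by a downward
simulation preorder preserves the language: `L(A/≡) = L(A)`. -/
theorem stmt9 {Q Sym : Type} (A : TDTA Q Sym) (sim : Q → Q → Prop)
    (hrefl : ∀ q, sim q q)
    (htrans : ∀ p q r, sim p q → sim q r → sim p r)
    (hstep : ∀ p q, sim p q → ∀ (a : Sym) (ps : List Q), (p, a, ps) ∈ A.delta →
      ∃ qs : List Q, (q, a, qs) ∈ A.delta ∧ ∃ h : ps.length = qs.length,
        ∀ i : Fin ps.length, sim (ps.get i) (qs.get (Fin.cast h i))) :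
    Lang (quotAut A
      ⟨fun p q => sim p q ∧ sim q p,
       ⟨fun q => ⟨hrefl q, hrefl q⟩,
        fun h => ⟨h.2, h.1⟩,
        fun h1 h2 => ⟨htrans _ _ _ h1.1 h2.1, htrans _ _ _ h2.2 h1.2⟩⟩⟩) = Lang A := by
  set s : Setoid Q := ⟨fun p q => sim p q ∧ sim q p,
       ⟨fun q => ⟨hrefl q, hrefl q⟩,
        fun h => ⟨h.2, h.1⟩,
        fun h1 h2 => ⟨htrans _ _ _ h1.1 h2.1, htrans _ _ _ h2.2 h1.2⟩⟩⟩ with hsdef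
  ext t
  constructor
  · rintro ⟨x, ⟨q, hq, rfl⟩, hacc⟩
    exact ⟨q, hq, accepts_of_accepts_quot A.delta sim htrans hstep s
      (fun _ _ h => h) hacc q q rfl (hrefl q)⟩
  · rintro ⟨q, hq, hacc⟩
    exact ⟨Quotient.mk s q, ⟨q, hq, rfl⟩, accepts_quot_of_accepts A.delta s hacc⟩
end

section
/- For a deterministic-like upward transfer: if (p₁,…,pₙ) is componentwise upward-trace included (parameterized by identity) in (q₁,…,qₙ), then for every tree t, every accepting t-run ρ, and every tuple of leaves v₁,…,vₙ of ρ at the same depth with ρ(vⱼ) = pⱼ, there exists an accepting t-run ρ' with ρ'(vⱼ) = qⱼ for all j and ρ'(v) = ρ(v) on all other leaves. -/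
/-- Runs with open leaves: trees over `Sym ⊕ Q`, where a leaf labelled by a state
`q` (a "hole") is read exactly at state `q`.  `AcceptsH δ q t` means there is such
a (partial) run of `δ` on `t` rooted at `q`. -/
inductive AcceptsH {Q Sym : Type} (δ : Set (Q × Sym × List Q)) :
    Q → TTree (Sym ⊕ Q) → Prop where
  | hole (q : Q) : AcceptsH δ q (TTree.node (Sum.inr q) [])
  | node {q : Q} {a : Sym} {qs : List Q} {ts : List (TTree (Sym ⊕ Q))}
      (hmem : (q, a, qs) ∈ δ) (hlen : qs.length = ts.length)
      (hchild : ∀ i : Fin qs.length, AcceptsH δ (qs.get i) (ts.get (Fin.cast hlen i))) :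
      AcceptsH δ q (TTree.node (Sum.inl a) ts)

/-- One-hole contexts over `Sym ⊕ Q`. -/
inductive Ctx (Q Sym : Type) : Type where
  | hole : Ctx Q Sym
  | node : Sym → List (TTree (Sym ⊕ Q)) → Ctx Q Sym → List (TTree (Sym ⊕ Q)) → Ctx Q Sym

/-- Filling the hole of a context with a tree. -/
def fill {Q Sym : Type} : Ctx Q Sym → TTree (Sym ⊕ Q) → TTree (Sym ⊕ Q)
  | Ctx.hole, t => t
  | Ctx.node a l C r, t => TTree.node (Sum.inl a) (l ++ fill C t :: r)

/-- A state leaf. -/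
def leafQ {Q Sym : Type} (q : Q) : TTree (Sym ⊕ Q) := TTree.node (Sum.inr q) []

/-- `TreeRel R` relates two trees with identical symbol structure whose state
leaves are componentwise related by `R`. -/
inductive TreeRel {Q Sym : Type} (R : Q → Q → Prop) :
    TTree (Sym ⊕ Q) → TTree (Sym ⊕ Q) → Prop where
  | leaf {p q : Q} : R p q →
      TreeRel R (TTree.node (Sum.inr p) []) (TTree.node (Sum.inr q) [])
  | node {a : Sym} {ts ts' : List (TTree (Sym ⊕ Q))} (hlen : ts.length = ts'.length)
      (h : ∀ i : Fin ts.length, TreeRel R (ts.get i) (ts'.get (Fin.cast hlen i))) :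
      TreeRel R (TTree.node (Sum.inl a) ts) (TTree.node (Sum.inl a) ts')

/-- `CtxRel R` relates two contexts with identical symbol structure whose side
branches are `TreeRel R`-related. -/
inductive CtxRel {Q Sym : Type} (R : Q → Q → Prop) : Ctx Q Sym → Ctx Q Sym → Prop where
  | hole : CtxRel R Ctx.hole Ctx.hole
  | node {a : Sym} {l r l' r' : List (TTree (Sym ⊕ Q))} {C C' : Ctx Q Sym}
      (hl : List.Forall₂ (TreeRel R) l l') (hC : CtxRel R C C')
      (hr : List.Forall₂ (TreeRel R) r r') :
      CtxRel R (Ctx.node a l C r) (Ctx.node a l' C' r')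

/-- A tree (with open state leaves) is accepted by the automaton. -/
def AccLangH {Q Sym : Type} (A : TDTA Q Sym) (t : TTree (Sym ⊕ Q)) : Prop :=
  ∃ i ∈ A.init, AcceptsH A.delta i t

/-- Upward trace inclusion parameterized by a relation `R` on side-branch states:
every accepting run placing `p` at the hole of a context can be replaced by an
accepting run placing `q` at the hole of an `R`-related context. -/
def upLe {Q Sym : Type} (A : TDTA Q Sym) (R : Q → Q → Prop) (p q : Q) : Prop :=
  ∀ C : Ctx Q Sym, AccLangH A (fill C (leafQ p)) →
    ∃ C' : Ctx Q Sym, CtxRel R C C' ∧ AccLangH A (fill C' (leafQ q))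

/-- Upward trace equivalence parameterized by `R`. -/
def upEq {Q Sym : Type} (A : TDTA Q Sym) (R : Q → Q → Prop) (p q : Q) : Prop :=
  upLe A R p q ∧ upLe A R q p

/-- Upward trace inclusion parameterized by identity: every accepting run using
`p` at an open leaf can be replaced by one using `q` there, agreeing with the
original run on all other (open) leaves. -/
def upLeId {Q Sym : Type} (A : TDTA Q Sym) (p q : Q) : Prop :=
  ∀ C : Ctx Q Sym, AccLangH A (fill C (leafQ p)) → AccLangH A (fill C (leafQ q))

/-- `ReplAt d prs t t'`: the trees `t` and `t'` coincide except that some state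
leaves of `t` at depth exactly `d`, labelled (left to right) by the first
components of `prs`, are replaced in `t'` by the corresponding second
components. -/
inductive ReplAt {Q Sym : Type} :
    ℕ → List (Q × Q) → TTree (Sym ⊕ Q) → TTree (Sym ⊕ Q) → Prop where
  | repl (p q : Q) :
      ReplAt 0 [(p, q)] (TTree.node (Sum.inr p) []) (TTree.node (Sum.inr q) [])
  | keep (n : ℕ) (t : TTree (Sym ⊕ Q)) : ReplAt n [] t t
  | node {n : ℕ} {a : Sym} {prs : List (Q × Q)} {ts ts' : List (TTree (Sym ⊕ Q))}
      (pss : List (List (Q × Q))) (hjoin : pss.flatten = prs)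
      (hl1 : pss.length = ts.length) (hl2 : pss.length = ts'.length)
      (h : ∀ i : Fin pss.length,
        ReplAt n (pss.get i) (ts.get (Fin.cast hl1 i)) (ts'.get (Fin.cast hl2 i))) :
      ReplAt (n + 1) prs (TTree.node (Sum.inl a) ts) (TTree.node (Sum.inl a) ts')


/-- Context composition. -/
def compCtx {Q Sym : Type} : Ctx Q Sym → Ctx Q Sym → Ctx Q Sym
  | Ctx.hole, D => D
  | Ctx.node a l C r, D => Ctx.node a l (compCtx C D) r

theorem fill_comp {Q Sym : Type} (C D : Ctx Q Sym) (t : TTree (Sym ⊕ Q)) :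
    fill (compCtx C D) t = fill C (fill D t) := by
  induction C with
  | hole => rfl
  | node a l C r ih => simp [compCtx, fill, ih]

/-- Contextual inclusion of open trees. -/
def CtxLe {Q Sym : Type} (A : TDTA Q Sym) (t t' : TTree (Sym ⊕ Q)) : Prop :=
  ∀ C : Ctx Q Sym, AccLangH A (fill C t) → AccLangH A (fill C t')

theorem ctxLe_list {Q Sym : Type} (A : TDTA Q Sym) (a : Sym)
    {ts ts' : List (TTree (Sym ⊕ Q))} (h : List.Forall₂ (CtxLe A) ts ts') :
    ∀ (l : List (TTree (Sym ⊕ Q))) (C : Ctx Q Sym),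
      AccLangH A (fill C (TTree.node (Sum.inl a) (l ++ ts))) →
      AccLangH A (fill C (TTree.node (Sum.inl a) (l ++ ts'))) := by
  induction h with
  | nil => intro l C hx; exact hx
  | @cons t t' ts ts' hhead _ ih =>
    intro l C hx
    have h1 : AccLangH A (fill C (TTree.node (Sum.inl a) (l ++ t' :: ts))) := by
      have e1 : fill C (TTree.node (Sum.inl a) (l ++ t :: ts))
          = fill (compCtx C (Ctx.node a l Ctx.hole ts)) t := by
        rw [fill_comp]; rfl
      have e2 : fill C (TTree.node (Sum.inl a) (l ++ t' :: ts))
          = fill (compCtx C (Ctx.node a l Ctx.hole ts)) t' := by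
        rw [fill_comp]; rfl
      rw [e2]
      exact hhead _ (e1 ▸ hx)
    have := ih (l ++ [t']) C (by simpa using h1)
    simpa using this

theorem replAt_ctxLe {Q Sym : Type} (A : TDTA Q Sym)
    {d : ℕ} {prs : List (Q × Q)} {t t' : TTree (Sym ⊕ Q)}
    (hrepl : ReplAt d prs t t') (h : ∀ pq ∈ prs, upLeId A pq.1 pq.2) :
    CtxLe A t t' := by
  induction hrepl with
  | repl p q =>
    exact h (p, q) (by simp)
  | keep n t => intro C hx; exact hx
  | @node n a prs ts ts' pss hjoin hl1 hl2 hrep ih =>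
    have hfa : List.Forall₂ (CtxLe A) ts ts' := by
      rw [List.forall₂_iff_get]
      refine ⟨hl1 ▸ hl2, fun i h1 h2 => ?_⟩
      have := ih ⟨i, hl1 ▸ h1⟩ (fun pq hpq => h pq ?_)
      · exact this
      · rw [← hjoin]
        exact List.mem_flatten.2 ⟨_, pss.get_mem _, hpq⟩
    intro C hx
    exact ctxLe_list A a hfa [] C hx

/-- if `(p₁,…,pₙ)` is componentwise upward-trace included
(parameterized by identity) in `(q₁,…,qₙ)`, then any accepting run with leaves
`p₁,…,pₙ` at the same depth can be turned into an accepting run with `q₁,…,qₙ`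
at those leaves, agreeing with the original on all other leaves. -/
theorem stmt13 {Q Sym : Type} (A : TDTA Q Sym) (prs : List (Q × Q))
    (h : ∀ pq ∈ prs, upLeId A pq.1 pq.2)
    (d : ℕ) (t t' : TTree (Sym ⊕ Q)) (hrepl : ReplAt d prs t t')
    (hacc : AccLangH A t) :
    AccLangH A t' := by
  have := replAt_ctxLe A hrepl h Ctx.hole
  exact this hacc
end

section
/- S(⊑^up(id), ⊒^up(id)) is good for saturation: saturating a tree automaton by adding a transition ⟨p,σ,r₁…rₙ⟩ whenever there exists ⟨p',σ,r₁'…rₙ'⟩ ∈ δ with p ⊑^up(id) p' and rᵢ' ⊑^up(id) rᵢ for all i (note the direction on targets) preserves the language. -/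
namespace Stmt14Aux

open List

variable {Q Sym : Type}

/-- Embedding closed trees into trees with open leaves. -/
def embed : TTree Sym → TTree (Sym ⊕ Q)
  | .node a ts => .node (Sum.inl a) (ts.attach.map fun x => embed x.1)
termination_by t => sizeOf t
decreasing_by simp_wf; exact Nat.lt_of_lt_of_le (List.sizeOf_lt_of_mem x.2) (Nat.le_add_left _ _)

lemma embed_node (a : Sym) (ts : List (TTree Sym)) :
    (embed (.node a ts) : TTree (Sym ⊕ Q)) = .node (Sum.inl a) (ts.map embed) := by
  rw [embed]
  congr 1
  exact List.attach_map_val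

/-- Context composition. -/
def comp : Ctx Q Sym → Ctx Q Sym → Ctx Q Sym
  | .hole, D => D
  | .node a l C r, D => .node a l (comp C D) r

lemma fill_comp (C D : Ctx Q Sym) (t : TTree (Sym ⊕ Q)) :
    fill (comp C D) t = fill C (fill D t) := by
  induction C with
  | hole => rfl
  | node a l C r ih => simp [comp, fill, ih]

lemma acceptsH_node' {δ : Set (Q × Sym × List Q)} {q : Q} {a : Sym} {qs : List Q}
    {ts : List (TTree (Sym ⊕ Q))} (hmem : (q, a, qs) ∈ δ)
    (h : List.Forall₂ (AcceptsH δ) qs ts) :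
    AcceptsH δ q (TTree.node (Sum.inl a) ts) := by
  rw [forall₂_iff_get] at h
  exact AcceptsH.node hmem h.1 (fun i => h.2 i i.2 (h.1 ▸ i.2))

lemma acceptsH_node_inv {δ : Set (Q × Sym × List Q)} {q : Q} {a : Sym}
    {ts : List (TTree (Sym ⊕ Q))} (h : AcceptsH δ q (TTree.node (Sum.inl a) ts)) :
    ∃ qs, (q, a, qs) ∈ δ ∧ List.Forall₂ (AcceptsH δ) qs ts := by
  cases h with
  | node hmem hlen hchild =>
    exact ⟨_, hmem, forall₂_iff_get.2 ⟨hlen, fun i h₁ h₂ => hchild ⟨i, h₁⟩⟩⟩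

lemma accepts_node' {δ : Set (Q × Sym × List Q)} {q : Q} {a : Sym} {qs : List Q}
    {ts : List (TTree Sym)} (hmem : (q, a, qs) ∈ δ)
    (h : List.Forall₂ (Accepts δ) qs ts) :
    Accepts δ q (TTree.node a ts) := by
  rw [forall₂_iff_get] at h
  exact Accepts.node hmem h.1 (fun i => h.2 i i.2 (h.1 ▸ i.2))

lemma forall₂_append_cons {α β : Type*} {R : α → β → Prop} :
    ∀ {l : List β} {qs : List α} {x : β} {r : List β}, Forall₂ R qs (l ++ x :: r) →
      ∃ ql qx qr, qs = ql ++ qx :: qr ∧ Forall₂ R ql l ∧ R qx x ∧ Forall₂ R qr r := by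
  intro l
  induction l with
  | nil =>
    intro qs x r h
    rcases forall₂_cons_right_iff.1 h with ⟨qx, qr, hx, hr, rfl⟩
    exact ⟨[], qx, qr, rfl, Forall₂.nil, hx, hr⟩
  | cons b l ih =>
    intro qs x r h
    rcases forall₂_cons_right_iff.1 h with ⟨qb, qs', hb, hrest, rfl⟩
    rcases ih hrest with ⟨ql, qx, qr, rfl, h1, h2, h3⟩
    exact ⟨qb :: ql, qx, qr, rfl, Forall₂.cons hb h1, h2, h3⟩

/-- Substitution: replace the hole-leaf `leafQ p` at the hole of `C` by a run tree. -/
lemma subst {δ : Set (Q × Sym × List Q)} {p : Q} {u : TTree (Sym ⊕ Q)}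
    (hu : AcceptsH δ p u) :
    ∀ (C : Ctx Q Sym) (q : Q), AcceptsH δ q (fill C (leafQ p)) →
      AcceptsH δ q (fill C u) := by
  intro C
  induction C with
  | hole =>
    intro q h
    cases h with
    | hole => exact hu
  | node a l C r ih =>
    intro q h
    rcases acceptsH_node_inv h with ⟨qs, hmem, hf⟩
    rcases forall₂_append_cons hf with ⟨ql, qx, qr, rfl, h1, h2, h3⟩
    exact acceptsH_node' hmem
      (rel_append h1 (Forall₂.cons (ih qx h2) h3))

lemma accLangH_subst {A : TDTA Q Sym} {p : Q} {u : TTree (Sym ⊕ Q)} {C : Ctx Q Sym}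
    (h : AccLangH A (fill C (leafQ p))) (hu : AcceptsH A.delta p u) :
    AccLangH A (fill C u) := by
  rcases h with ⟨i, hi, hr⟩
  exact ⟨i, hi, subst hu C i hr⟩

/-- Replace open leaves `qs'` (pointwise `upLeId`-above `qs`) by embedded trees
accepted (in the recursive sense) from `qs`. -/
lemma step (A : TDTA Q Sym) :
    ∀ (qs qs' : List Q) (ts : List (TTree Sym)),
      Forall₂ (fun q' q => upLeId A q' q) qs' qs →
      Forall₂ (fun (q : Q) (t : TTree Sym) =>
        ∀ D : Ctx Q Sym, AccLangH A (fill D (leafQ q)) → AccLangH A (fill D (embed t))) qs ts →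
      ∀ (C : Ctx Q Sym) (a : Sym) (done : List (TTree (Sym ⊕ Q))),
      AccLangH A (fill C (TTree.node (Sum.inl a) (done ++ qs'.map leafQ))) →
      AccLangH A (fill C (TTree.node (Sum.inl a) (done ++ ts.map embed))) := by
  intro qs qs' ts h1 h2
  induction h1 generalizing ts with
  | nil =>
    cases h2
    intro C a done h; exact h
  | @cons q' q qs' qs hq _ ih =>
    rcases forall₂_cons_left_iff.1 h2 with ⟨t, ts', ht, hts, rfl⟩
    intro C a done h
    set D := comp C (Ctx.node a done Ctx.hole (qs'.map leafQ)) with hD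
    have hfillD : ∀ x, fill D x = fill C (TTree.node (Sum.inl a) (done ++ x :: qs'.map leafQ)) := by
      intro x; rw [hD, fill_comp]; rfl
    have ha : AccLangH A (fill D (leafQ q')) := by rw [hfillD]; exact h
    have hb : AccLangH A (fill D (leafQ q)) := hq D ha
    have hc : AccLangH A (fill D (embed t)) := ht D hb
    rw [hfillD] at hc
    have := ih ts' hts C a (done ++ [embed t])
    simp only [List.append_assoc, List.singleton_append] at this
    exact this hc

lemma accepts_of_acceptsH_embed {δ : Set (Q × Sym × List Q)} :
    ∀ (t : TTree Sym) (q : Q), AcceptsH δ q (embed t) → Accepts δ q t := by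
  intro t
  induction t using TTree.rec
    (motive_2 := fun ts => ∀ qs, Forall₂ (AcceptsH δ) qs (ts.map embed) →
      Forall₂ (Accepts δ) qs ts) with
  | node a ts ih =>
    intro q h
    rw [embed_node] at h
    rcases acceptsH_node_inv h with ⟨qs, hmem, hf⟩
    exact accepts_node' hmem (ih qs hf)
  | nil =>
    rename_i qs h
    cases h; exact Forall₂.nil
  | cons t ts iht ihts =>
    rename_i qs h
    rcases forall₂_cons_right_iff.1 h with ⟨qx, qr, hx, hr, rfl⟩
    exact Forall₂.cons (iht qx hx) (ihts qr hr)

end Stmt14Aux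

/-- `S(⊑up(id), ⊒up(id))` is good for saturation: adding a
transition `⟨p,σ,r₁…rₙ⟩` whenever there exists `⟨p',σ,r₁'…rₙ'⟩ ∈ δ` with
`p ⊑up(id) p'` and `rᵢ' ⊑up(id) rᵢ` for all `i` preserves the language. -/
theorem stmt14 {Q Sym : Type} (A : TDTA Q Sym) :
    Lang (satAut A (Srel (fun p p' => upLeId A p p')
      (fun r r' => upLeId A r' r))) = Lang A := by
  open Stmt14Aux List in
  apply Set.eq_of_subset_of_subset
  · rintro t ⟨i, hi, hrun⟩
    have main : ∀ (q : Q) (t : TTree Sym),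
        Accepts (satAut A (Srel (fun p p' => upLeId A p p')
          (fun r r' => upLeId A r' r))).delta q t →
        ∀ D : Ctx Q Sym, AccLangH A (fill D (leafQ q)) → AccLangH A (fill D (embed t)) := by
      intro q t h
      induction h with
      | @node q a qs ts hmem hlen hchild ih =>
        intro D hD
        rcases hmem with ⟨⟨q', a', qs'⟩, hmem', heq, hle, hts⟩
        cases heq
        have hD' : AccLangH A (fill D (leafQ q')) := hle D hD
        have hrun' : AcceptsH A.delta q' (TTree.node (Sum.inl a) (qs'.map leafQ)) :=
          acceptsH_node' hmem' (forall₂_map_right_iff.2 (forall₂_same.2 fun x _ => .hole x))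
        have hD2 : AccLangH A (fill D (TTree.node (Sum.inl a) ([] ++ qs'.map leafQ))) :=
          accLangH_subst hD' hrun'
        have hts' : Forall₂ (fun q' q => upLeId A q' q) qs' qs := by
          rw [forall₂_iff_get] at hts ⊢
          exact ⟨hts.1.symm, fun i h₁ h₂ => hts.2 i h₂ h₁⟩
        have hih : Forall₂ (fun (q : Q) (t : TTree Sym) =>
            ∀ D : Ctx Q Sym, AccLangH A (fill D (leafQ q)) → AccLangH A (fill D (embed t)))
            qs ts :=
          forall₂_iff_get.2 ⟨hlen, fun i h₁ h₂ => ih ⟨i, h₁⟩⟩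
        have := step A qs qs' ts hts' hih D a [] hD2
        rw [List.nil_append] at this
        rw [embed_node]
        exact this
    have : AccLangH A (fill Ctx.hole (embed t)) :=
      main i t hrun Ctx.hole ⟨i, hi, AcceptsH.hole i⟩
    rcases this with ⟨i', hi', hr⟩
    exact ⟨i', hi', accepts_of_acceptsH_embed t i' hr⟩
  · rintro t ⟨i, hi, hrun⟩
    refine ⟨i, hi, ?_⟩
    clear hi
    induction hrun with
    | @node q a qs ts hmem hlen hchild ih =>
      exact Accepts.node ⟨(q, a, qs), hmem, rfl, fun C h => h,
        forall₂_same.2 fun x _ C h => h⟩ hlen ih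
end
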